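/- Let G = (V, A, R) be a context-free grammar over the alphabet A = {−1, 0, 1}, and for a nonterminal S define the displacement δ(S) = sup { Σw : w ∈ L(S) } ∈ ℤ ∪ {−∞, +∞}, where L(S) is the language generated by S and Σw is the sum of letters of w. Suppose δ(S) < +∞ and δ(S) is attained by some word (i.e., the sup is a max). Then there exists a complete elementary parse tree with root labeled S whose yield w satisfies Σw = δ(S). -/

import Mathlib

/-- Parse trees over a CFG. -/
inductive PTree (V A : Type) where
  | leaf : (V ⊕ A) → PTree V A
  | node : V → List (PTree V A) → PTree V A

namespace PTree

variable {V A : Type}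

/-- Label of the root, as a symbol. -/
def rootLabel : PTree V A → V ⊕ A
  | leaf s => s
  | node X _ => Sum.inl X

/-- Nonterminals occurring in the tree. -/
def nts : PTree V A → List V
  | leaf (Sum.inl X) => [X]
  | leaf (Sum.inr _) => []
  | node X ts => X :: (ts.attach.map (fun t => nts t.1)).flatten
  decreasing_by
    have := List.sizeOf_lt_of_mem t.2
    simp_wf; omega

/-- Yield: the terminal leaf labels, read from left to right. -/
def yield : PTree V A → List A
  | leaf (Sum.inl _) => []
  | leaf (Sum.inr a) => [a]
  | node _ ts => (ts.attach.map (fun t => yield t.1)).flatten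
  decreasing_by
    have := List.sizeOf_lt_of_mem t.2
    simp_wf; omega

/-- Validity w.r.t. the rules `R`. -/
inductive valid (R : V → List (V ⊕ A) → Prop) : PTree V A → Prop
  | leaf (s : V ⊕ A) : valid R (.leaf s)
  | node (X : V) (ts : List (PTree V A)) :
      R X (ts.map rootLabel) → (∀ t ∈ ts, valid R t) → valid R (.node X ts)

/-- A parse tree is complete if all its leaves are labeled by terminals. -/
inductive complete : PTree V A → Prop
  | leaf (a : A) : complete (.leaf (Sum.inr a))
  | node (X : V) (ts : List (PTree V A)) :
      (∀ t ∈ ts, complete t) → complete (.node X ts)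

/-- Elementary: no node has a proper descendant labeled by the same nonterminal. -/
inductive elem : PTree V A → Prop
  | leaf (s : V ⊕ A) : elem (.leaf s)
  | node (X : V) (ts : List (PTree V A)) :
      (∀ t ∈ ts, X ∉ nts t) → (∀ t ∈ ts, elem t) → elem (.node X ts)


def size : PTree V A → ℕ
  | leaf _ => 1
  | node _ ts => 1 + (ts.attach.map (fun t => size t.1)).sum
  decreasing_by
    have := List.sizeOf_lt_of_mem t.2
    simp_wf; omega

lemma yield_node (X : V) (ts : List (PTree V A)) :
    yield (node X ts) = (ts.map yield).flatten := by
  rw [yield]; congr 1; simp [List.attach_map_val]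

lemma nts_node (X : V) (ts : List (PTree V A)) :
    nts (node X ts) = X :: (ts.map nts).flatten := by
  rw [nts]; congr 2; simp [List.attach_map_val]

lemma size_node (X : V) (ts : List (PTree V A)) :
    size (node X ts) = 1 + (ts.map size).sum := by
  rw [size]; congr 2; simp [List.attach_map_val]

lemma size_pos (t : PTree V A) : 0 < size t := by
  cases t with
  | leaf s => rw [size]; omega
  | node X ts => rw [size_node]; omega

lemma size_lt_of_mem {t : PTree V A} {X : V} {ts : List (PTree V A)} (h : t ∈ ts) :
    size t < size (node X ts) := by
  rw [size_node]
  have : size t ≤ (ts.map size).sum :=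
    List.single_le_sum (fun _ _ => Nat.zero_le _) _ (List.mem_map_of_mem (f := size) h)
  omega

lemma valid_node_iff {R : V → List (V ⊕ A) → Prop} {X : V} {ts : List (PTree V A)} :
    valid R (node X ts) ↔ R X (ts.map rootLabel) ∧ ∀ t ∈ ts, valid R t := by
  constructor
  · rintro (_ | ⟨_, _, h1, h2⟩); exact ⟨h1, h2⟩
  · rintro ⟨h1, h2⟩; exact valid.node X ts h1 h2

lemma complete_node_iff {X : V} {ts : List (PTree V A)} :
    complete (node X ts : PTree V A) ↔ ∀ t ∈ ts, complete t := by
  constructor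
  · rintro (_ | ⟨_, _, h⟩); exact h
  · exact complete.node X ts

lemma ctx (R : V → List (V ⊕ ℤ) → Prop) :
    ∀ n (t : PTree V ℤ), size t ≤ n → valid R t → complete t → ∀ X, X ∈ nts t →
    ∃ s : PTree V ℤ, rootLabel s = Sum.inl X ∧ valid R s ∧ complete s ∧ size s ≤ size t ∧
      ∃ f : PTree V ℤ → PTree V ℤ,
        ∀ r, rootLabel r = Sum.inl X → valid R r → complete r →
          valid R (f r) ∧ complete (f r) ∧ rootLabel (f r) = rootLabel t ∧
          size (f r) + size s = size t + size r ∧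
          (yield (f r)).sum + (yield s).sum = (yield t).sum + (yield r).sum := by
  intro n
  induction n with
  | zero => intro t hn; have := size_pos t; omega
  | succ n ih =>
    intro t hn hv hc X hX
    cases t with
    | leaf s =>
      cases s with
      | inl Y => cases hc
      | inr a => rw [nts] at hX; cases hX
    | node Y ts =>
      rw [nts_node] at hX
      rcases List.mem_cons.mp hX with rfl | hX
      · refine ⟨node X ts, rfl, hv, hc, le_refl _, id, fun r hr hvr hcr => ?_⟩
        exact ⟨hvr, hcr, hr.symm ▸ rfl, by simp only [id]; omega, by simp only [id]; omega⟩
      · rcases List.mem_flatten.mp hX with ⟨l, hl, hXl⟩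
        rcases List.mem_map.mp hl with ⟨c, hc', rfl⟩
        rcases List.append_of_mem hc' with ⟨l₁, l₂, rfl⟩
        have hvt := valid_node_iff.mp hv
        have hct := complete_node_iff.mp hc
        have hvc : valid R c := hvt.2 c hc'
        have hcc : complete c := hct c hc'
        have hsize : size c ≤ n := by
          have := size_lt_of_mem (X := Y) hc'
          omega
        obtain ⟨s, hrs, hvs, hcs, hss, f, hf⟩ := ih c hsize hvc hcc X hXl
        refine ⟨s, hrs, hvs, hcs, le_trans hss (le_of_lt (size_lt_of_mem hc')),
          fun r => node Y (l₁ ++ f r :: l₂), fun r hr hvr hcr => ?_⟩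
        obtain ⟨hvf, hcf, hrf, hsf, hyf⟩ := hf r hr hvr hcr
        have hroot : (l₁ ++ f r :: l₂).map rootLabel = (l₁ ++ c :: l₂).map rootLabel := by
          simp [hrf]
        refine ⟨?_, ?_, rfl, ?_, ?_⟩
        · refine valid_node_iff.mpr ⟨hroot ▸ hvt.1, fun t ht => ?_⟩
          rcases List.mem_append.mp ht with h | h
          · exact hvt.2 t (by simp [h])
          · rcases List.mem_cons.mp h with rfl | h
            · exact hvf
            · exact hvt.2 t (by simp [h])
        · refine complete_node_iff.mpr (fun t ht => ?_)
          rcases List.mem_append.mp ht with h | h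
          · exact hct t (by simp [h])
          · rcases List.mem_cons.mp h with rfl | h
            · exact hcf
            · exact hct t (by simp [h])
        · simp only [size_node, List.map_append, List.map_cons, List.sum_append,
            List.sum_cons]
          omega
        · simp only [yield_node, List.map_append, List.map_cons, List.flatten_append,
            List.flatten_cons, List.sum_append]
          omega


lemma pump (R : V → List (V ⊕ ℤ) → Prop) :
    ∀ n (t : PTree V ℤ), size t ≤ n → valid R t → complete t → ¬ elem t →
    ∃ t' t'' : PTree V ℤ,
      valid R t' ∧ complete t' ∧ rootLabel t' = rootLabel t ∧
      valid R t'' ∧ complete t'' ∧ rootLabel t'' = rootLabel t ∧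
      size t' < size t ∧
      (yield t').sum + (yield t'').sum = 2 * (yield t).sum := by
  intro n
  induction n with
  | zero => intro t hn; have := size_pos t; omega
  | succ n ih =>
    intro t hn hv hc he
    cases t with
    | leaf s => exact absurd (elem.leaf s) he
    | node X ts =>
      have hvt := valid_node_iff.mp hv
      have hct := complete_node_iff.mp hc
      by_cases hA : ∀ c ∈ ts, X ∉ nts c
      · -- some child is not elementary
        have hB : ∃ c ∈ ts, ¬ elem c := by
          by_contra hB
          push_neg at hB
          exact he (elem.node X ts hA hB)
        obtain ⟨c, hc', hce⟩ := hB
        rcases List.append_of_mem hc' with ⟨l₁, l₂, rfl⟩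
        have hsize : size c ≤ n := by
          have := size_lt_of_mem (X := X) hc'
          omega
        obtain ⟨c', c'', hv1, hc1, hr1, hv2, hc2, hr2, hs1, hy1⟩ :=
          ih c hsize (hvt.2 c hc') (hct c hc') hce
        refine ⟨node X (l₁ ++ c' :: l₂), node X (l₁ ++ c'' :: l₂), ?_, ?_, rfl, ?_, ?_, rfl,
          ?_, ?_⟩
        · refine valid_node_iff.mpr ⟨by simpa [hr1] using hvt.1, fun t ht => ?_⟩
          rcases List.mem_append.mp ht with h | h
          · exact hvt.2 t (by simp [h])
          · rcases List.mem_cons.mp h with rfl | h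
            · exact hv1
            · exact hvt.2 t (by simp [h])
        · refine complete_node_iff.mpr (fun t ht => ?_)
          rcases List.mem_append.mp ht with h | h
          · exact hct t (by simp [h])
          · rcases List.mem_cons.mp h with rfl | h
            · exact hc1
            · exact hct t (by simp [h])
        · refine valid_node_iff.mpr ⟨by simpa [hr2] using hvt.1, fun t ht => ?_⟩
          rcases List.mem_append.mp ht with h | h
          · exact hvt.2 t (by simp [h])
          · rcases List.mem_cons.mp h with rfl | h
            · exact hv2
            · exact hvt.2 t (by simp [h])
        · refine complete_node_iff.mpr (fun t ht => ?_)
          rcases List.mem_append.mp ht with h | h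
          · exact hct t (by simp [h])
          · rcases List.mem_cons.mp h with rfl | h
            · exact hc2
            · exact hct t (by simp [h])
        · simp only [size_node, List.map_append, List.map_cons, List.sum_append,
            List.sum_cons]
          omega
        · simp only [yield_node, List.map_append, List.map_cons, List.flatten_append,
            List.flatten_cons, List.sum_append] at hy1 ⊢
          omega
      · -- the root label repeats inside a child
        push_neg at hA
        obtain ⟨c, hc', hXc⟩ := hA
        rcases List.append_of_mem hc' with ⟨l₁, l₂, rfl⟩
        have hsize : size c ≤ n := by
          have := size_lt_of_mem (X := X) hc'
          omega
        obtain ⟨s, hrs, hvs, hcs, hss, f, hf⟩ :=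
          ctx R n c hsize (hvt.2 c hc') (hct c hc') X hXc
        obtain ⟨hvf, hcf, hrf, hsf, hyf⟩ := hf (node X (l₁ ++ c :: l₂)) rfl hv hc
        refine ⟨s, node X (l₁ ++ f (node X (l₁ ++ c :: l₂)) :: l₂),
          hvs, hcs, hrs, ?_, ?_, rfl, ?_, ?_⟩
        · refine valid_node_iff.mpr ⟨by simpa [hrf] using hvt.1, fun t ht => ?_⟩
          rcases List.mem_append.mp ht with h | h
          · exact hvt.2 t (by simp [h])
          · rcases List.mem_cons.mp h with rfl | h
            · exact hvf
            · exact hvt.2 t (by simp [h])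
        · refine complete_node_iff.mpr (fun t ht => ?_)
          rcases List.mem_append.mp ht with h | h
          · exact hct t (by simp [h])
          · rcases List.mem_cons.mp h with rfl | h
            · exact hcf
            · exact hct t (by simp [h])
        · have := size_lt_of_mem (X := X) hc'
          omega
        · simp only [yield_node, List.map_append, List.map_cons, List.flatten_append,
            List.flatten_cons, List.sum_append] at hyf ⊢
          omega

end PTree
/-- For a grammar over the terminal alphabet `{−1, 0, 1}`, if the displacement of `S`
is attained by (the yield of) some complete parse tree `t₀` rooted at `S`, then there
is a complete *elementary* parse tree rooted at `S` whose yield has the same sum. -/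
theorem exists_elementary_parse_tree {V : Type}
    (R : V → List (V ⊕ ℤ) → Prop)
    (hA : ∀ X rhs, R X rhs → ∀ a : ℤ, Sum.inr a ∈ rhs → a = -1 ∨ a = 0 ∨ a = 1)
    (S : V) (t₀ : PTree V ℤ)
    (hv₀ : PTree.valid R t₀) (hc₀ : PTree.complete t₀)
    (hr₀ : PTree.rootLabel t₀ = Sum.inl S)
    (hmax : ∀ t : PTree V ℤ, PTree.valid R t → PTree.complete t →
      PTree.rootLabel t = Sum.inl S → (PTree.yield t).sum ≤ (PTree.yield t₀).sum) :
    ∃ t : PTree V ℤ, PTree.valid R t ∧ PTree.complete t ∧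
      PTree.rootLabel t = Sum.inl S ∧ PTree.elem t ∧
      (PTree.yield t).sum = (PTree.yield t₀).sum := by
  suffices h : ∀ n (t : PTree V ℤ), PTree.size t ≤ n → PTree.valid R t → PTree.complete t →
      PTree.rootLabel t = Sum.inl S → (PTree.yield t).sum = (PTree.yield t₀).sum →
      ∃ t' : PTree V ℤ, PTree.valid R t' ∧ PTree.complete t' ∧
        PTree.rootLabel t' = Sum.inl S ∧ PTree.elem t' ∧
        (PTree.yield t').sum = (PTree.yield t₀).sum by
    exact h (PTree.size t₀) t₀ le_rfl hv₀ hc₀ hr₀ rfl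
  intro n
  induction n with
  | zero => intro t hn; have := PTree.size_pos t; omega
  | succ n ih =>
    intro t hn hv hc hr hy
    by_cases he : PTree.elem t
    · exact ⟨t, hv, hc, hr, he, hy⟩
    · obtain ⟨t', t'', hv1, hc1, hr1, hv2, hc2, hr2, hs, hsum⟩ :=
        PTree.pump R (PTree.size t) t le_rfl hv hc he
      rw [hr] at hr1 hr2
      have h1 := hmax t' hv1 hc1 hr1
      have h2 := hmax t'' hv2 hc2 hr2
      have hy1 : (PTree.yield t').sum = (PTree.yield t₀).sum := by omega
      exact ih t' (by omega) hv1 hc1 hr1 hy1
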